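/- arXiv:2402.07341 — 3 statements merged into one kernel-verified Lean document; each statement's English description precedes it below -/
import Mathlib

section
/- (Elliptical potential lemma.) Let x_1, …, x_t ∈ ℝ^d be vectors with ‖x_s‖₂ ≤ X for all s ∈ [t], let λ > 0, and let V_s = λI + Σ_{r=1}^s x_r x_rᵀ. Then Σ_{s=1}^t ‖x_s‖²_{V_s⁻¹} ≤ ln(det(V_t)/det(λI)), and moreover ln(det(V_t)/det(λI)) ≤ d ln(1 + X²t/(dλ)). -/
open Matrix Finset Real

private lemma vecMulVec_mulVec' {d : ℕ} (a b y : Fin d → ℝ) :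
    (vecMulVec a b) *ᵥ y = (b ⬝ᵥ y) • a := by
  funext i
  simp [vecMulVec_apply, Matrix.mulVec, dotProduct, Finset.mul_sum, mul_comm, mul_assoc,
    mul_left_comm]

private lemma posSemidef_vecMulVec' {d : ℕ} (a : Fin d → ℝ) :
    (vecMulVec a a).PosSemidef := by
  refine posSemidef_iff_dotProduct_mulVec.mpr
    ⟨by ext i j; simp [Matrix.conjTranspose_apply, vecMulVec_apply, mul_comm], fun y => ?_⟩
  rw [vecMulVec_mulVec']
  have hy : star y = y := by simp
  rw [hy, dotProduct_smul, smul_eq_mul, dotProduct_comm y a]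
  exact mul_self_nonneg _

/-- the elliptical potential lemma.  For vectors `x_1,…,x_t` with
`‖x_s‖₂ ≤ X`, `λ > 0` and `V_s = λI + Σ_{r=1}^s x_r x_rᵀ`,
`Σ_{s=1}^t ‖x_s‖²_{V_s⁻¹} ≤ ln(det V_t / det(λI))` and
`ln(det V_t / det(λI)) ≤ d ln(1 + X²t/(dλ))`. -/
theorem elliptical_potential
    {d : ℕ} (hd : 0 < d) (t : ℕ) (x : ℕ → Fin d → ℝ) (X lam : ℝ)
    (hX : ∀ s ∈ Finset.Icc 1 t, Real.sqrt (x s ⬝ᵥ x s) ≤ X)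
    (hlam : 0 < lam)
    (V : ℕ → Matrix (Fin d) (Fin d) ℝ)
    (hV : ∀ s, V s = lam • (1 : Matrix (Fin d) (Fin d) ℝ)
        + ∑ r ∈ Finset.Icc 1 s, vecMulVec (x r) (x r)) :
    (∑ s ∈ Finset.Icc 1 t, x s ⬝ᵥ (V s)⁻¹.mulVec (x s)
        ≤ Real.log ((V t).det / (lam • (1 : Matrix (Fin d) (Fin d) ℝ)).det))
    ∧ Real.log ((V t).det / (lam • (1 : Matrix (Fin d) (Fin d) ℝ)).det)
        ≤ d * Real.log (1 + X^2 * t / (d * lam)) := by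
  have hlamPD : (lam • (1 : Matrix (Fin d) (Fin d) ℝ)).PosDef := by
    rw [smul_one_eq_diagonal]
    exact posDef_diagonal_iff.mpr fun _ => hlam
  have hpos : ∀ s, (V s).PosDef := by
    intro s
    rw [hV s]
    exact hlamPD.add_posSemidef <| Finset.sum_induction _ _
      (fun A B hA hB => hA.add hB) Matrix.PosSemidef.zero
      (fun r _ => posSemidef_vecMulVec' (x r))
  have detpos : ∀ s, 0 < (V s).det := fun s => (hpos s).det_pos
  have hV0 : V 0 = lam • (1 : Matrix (Fin d) (Fin d) ℝ) := by
    rw [hV 0]; simp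
  -- Part 1
  have key : ∀ s : ℕ, x (s+1) ⬝ᵥ (V (s+1))⁻¹.mulVec (x (s+1))
      ≤ Real.log (V (s+1)).det - Real.log (V s).det := by
    intro s
    have hsum : V (s+1) = V s + vecMulVec (x (s+1)) (x (s+1)) := by
      rw [hV (s+1), hV s, Finset.sum_Icc_succ_top (Nat.succ_le_succ s.zero_le), add_assoc]
    have hVs : V s = V (s+1) + Matrix.replicateCol Unit (-(x (s+1))) * Matrix.replicateRow Unit (x (s+1)) := by
      have hcolneg : Matrix.replicateCol Unit (-(x (s+1))) = -Matrix.replicateCol Unit (x (s+1)) := by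
        ext i j; simp
      rw [hcolneg, Matrix.neg_mul, ← vecMulVec_eq Unit, hsum]
      abel
    have hdet1 : (V s).det
        = (V (s+1)).det * (1 + (x (s+1)) ⬝ᵥ (V (s+1))⁻¹ *ᵥ (-(x (s+1)))) := by
      rw [hVs, Matrix.det_add_replicateCol_mul_replicateRow (detpos (s+1)).ne'.isUnit]
      congr 1
      rw [Matrix.det_unique, Matrix.add_apply, Matrix.one_apply_eq, Matrix.mul_assoc,
        ← Matrix.replicateCol_mulVec, Matrix.replicateRow_mul_replicateCol_apply]
    have ha : (V s).det / (V (s+1)).det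
        = 1 - x (s+1) ⬝ᵥ (V (s+1))⁻¹.mulVec (x (s+1)) := by
      rw [hdet1, Matrix.mulVec_neg, dotProduct_neg, ← sub_eq_add_neg,
        mul_div_cancel_left₀ _ (detpos (s+1)).ne']
    have hr : 0 < (V s).det / (V (s+1)).det := div_pos (detpos s) (detpos (s+1))
    have h1 := Real.log_le_sub_one_of_pos hr
    rw [Real.log_div (detpos s).ne' (detpos (s+1)).ne'] at h1
    have := ha
    linarith [ha ▸ h1]
  have aux : ∀ n : ℕ, ∑ s ∈ Finset.Icc 1 n, x s ⬝ᵥ (V s)⁻¹.mulVec (x s)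
      ≤ Real.log (V n).det - Real.log (V 0).det := by
    intro n
    induction n with
    | zero => simp
    | succ n ih =>
      rw [Finset.sum_Icc_succ_top (Nat.succ_le_succ n.zero_le)]
      linarith [key n]
  have part1 : ∑ s ∈ Finset.Icc 1 t, x s ⬝ᵥ (V s)⁻¹.mulVec (x s)
      ≤ Real.log ((V t).det / (lam • (1 : Matrix (Fin d) (Fin d) ℝ)).det) := by
    rw [Real.log_div (detpos t).ne' (hV0 ▸ detpos 0).ne']
    have := aux t
    rw [hV0] at this
    exact this
  refine ⟨part1, ?_⟩
  -- Part 2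
  have hd0 : (0:ℝ) < d := by exact_mod_cast hd
  have hH := (hpos t).isHermitian
  set μ := hH.eigenvalues with hμdef
  have hμ : ∀ i, 0 < μ i := (hpos t).eigenvalues_pos
  have hdetprod : (V t).det = ∏ i, μ i := by
    simpa using hH.det_eq_prod_eigenvalues
  have htrace : (V t).trace = ∑ i, μ i := by
    simpa using hH.trace_eq_sum_eigenvalues
  have htrpos : 0 < (V t).trace := by
    have : Nonempty (Fin d) := ⟨⟨0, hd⟩⟩
    rw [htrace]
    exact Finset.sum_pos (fun i _ => hμ i) (Finset.univ_nonempty)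
  have htr_le : (V t).trace ≤ d * lam + t * X^2 := by
    rw [hV t, Matrix.trace_add, Matrix.trace_smul, Matrix.trace_one, Matrix.trace_sum]
    have h1 : ∀ r ∈ Finset.Icc 1 t, (vecMulVec (x r) (x r)).trace ≤ X^2 := by
      intro r hr
      have htr : (vecMulVec (x r) (x r)).trace = x r ⬝ᵥ x r := by
        simp [Matrix.trace, Matrix.diag, vecMulVec_apply, dotProduct]
      have hnn : 0 ≤ x r ⬝ᵥ x r := Finset.sum_nonneg fun i _ => mul_self_nonneg _
      have : x r ⬝ᵥ x r = (Real.sqrt (x r ⬝ᵥ x r))^2 := (Real.sq_sqrt hnn).symm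
      rw [htr, this]
      exact pow_le_pow_left₀ (Real.sqrt_nonneg _) (hX r hr) 2
    calc lam • ((Fintype.card (Fin d) : ℝ)) + ∑ r ∈ Finset.Icc 1 t, (vecMulVec (x r) (x r)).trace
        ≤ lam • ((Fintype.card (Fin d) : ℝ)) + ∑ _r ∈ Finset.Icc 1 t, X^2 :=
          add_le_add_right (Finset.sum_le_sum h1) _
      _ = d * lam + t * X^2 := by
          rw [Finset.sum_const, Nat.card_Icc]
          simp [Fintype.card_fin, smul_eq_mul, nsmul_eq_mul, mul_comm]
  have hlog : Real.log (V t).det ≤ d * Real.log ((V t).trace / d) := by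
    have hw : ∑ _i : Fin d, ((d:ℝ)⁻¹) = 1 := by
      rw [Finset.sum_const]
      simp [Fintype.card_fin]
      field_simp
    have jensen := (strictConcaveOn_log_Ioi.concaveOn).le_map_sum
      (t := Finset.univ) (w := fun _ : Fin d => (d:ℝ)⁻¹) (p := μ)
      (fun i _ => by positivity) hw (fun i _ => Set.mem_Ioi.mpr (hμ i))
    have hsmul : ∑ i : Fin d, ((d:ℝ)⁻¹) • μ i = (V t).trace / d := by
      rw [htrace]
      simp only [smul_eq_mul, ← Finset.mul_sum]
      rw [inv_mul_eq_div]
    have hsmul2 : ∑ i : Fin d, ((d:ℝ)⁻¹) • Real.log (μ i)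
        = (∑ i : Fin d, Real.log (μ i)) / d := by
      simp only [smul_eq_mul, ← Finset.mul_sum]
      rw [inv_mul_eq_div]
    rw [hsmul, hsmul2] at jensen
    rw [hdetprod, Real.log_prod (fun i _ => (hμ i).ne')]
    calc ∑ i : Fin d, Real.log (μ i) = d * ((∑ i : Fin d, Real.log (μ i)) / d) := by
          field_simp
      _ ≤ d * Real.log ((V t).trace / d) := by
          exact mul_le_mul_of_nonneg_left jensen hd0.le
  have hdetlam : (lam • (1 : Matrix (Fin d) (Fin d) ℝ)).det = lam ^ d := by
    rw [Matrix.det_smul, Matrix.det_one, mul_one, Fintype.card_fin]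
  rw [Real.log_div (detpos t).ne' (by rw [hdetlam]; positivity), hdetlam, Real.log_pow]
  have htrdpos : 0 < (V t).trace / d := div_pos htrpos hd0
  have step1 : Real.log (V t).det - d * Real.log lam
      ≤ d * Real.log ((V t).trace / (d * lam)) := by
    have : Real.log ((V t).trace / (d * lam))
        = Real.log ((V t).trace / d) - Real.log lam := by
      rw [div_mul_eq_div_div, Real.log_div htrdpos.ne' hlam.ne']
    rw [this, mul_sub]
    linarith [hlog]
  have step2 : Real.log ((V t).trace / (d * lam)) ≤ Real.log (1 + X^2 * t / (d * lam)) := by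
    apply Real.log_le_log (div_pos htrpos (by positivity))
    have heq : 1 + X^2 * t / (d * lam) = (d * lam + t * X^2) / (d * lam) := by
      field_simp
    rw [heq]
    exact div_le_div_of_nonneg_right htr_le (by positivity) |>.trans_eq rfl
  calc Real.log (V t).det - d * Real.log lam
      ≤ d * Real.log ((V t).trace / (d * lam)) := step1
    _ ≤ d * Real.log (1 + X^2 * t / (d * lam)) :=
        mul_le_mul_of_nonneg_left step2 hd0.le
end

section
/- Define l̄nln(x) := ln ln(max{e, x}) and l̄nln²(x) := (l̄nln(x))². Let x ≥ e and a, b > 0, with the convention ln ln(x) = 0 for x ≤ e. If x ≥ a + 2b(e + l̄nln²(2a) + l̄nln²(2b)), then x ≥ a + b (ln ln x)². -/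
open Real

/-- `2 log w ≤ w` for `w > 0`. -/
lemma two_log_le (w : ℝ) (hw : 0 < w) : 2 * Real.log w ≤ w := by
  have hs : 0 < Real.sqrt w := Real.sqrt_pos.mpr hw
  have h1 : Real.log (Real.sqrt w) ≤ Real.sqrt w - 1 :=
    Real.log_le_sub_one_of_pos hs
  have h2 : Real.log (Real.sqrt w) = Real.log w / 2 := Real.log_sqrt hw.le
  have h3 : Real.sqrt w ^ 2 = w := Real.sq_sqrt hw.le
  nlinarith [sq_nonneg (Real.sqrt w - 2)]

/-- `(log v)^2 ≤ v` for `v ≥ 1`. -/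
lemma sq_log_le (v : ℝ) (hv : 1 ≤ v) : (Real.log v) ^ 2 ≤ v := by
  have hu : 0 ≤ Real.log v := Real.log_nonneg hv
  rcases eq_or_lt_of_le hu with h0 | h0
  · rw [← h0]; norm_num; linarith
  · have h1 : 2 * Real.log (Real.log v) ≤ Real.log v := two_log_le _ h0
    have h2 : Real.log ((Real.log v) ^ 2) ≤ Real.log v := by
      rw [Real.log_pow]; push_cast; linarith
    calc (Real.log v) ^ 2 = Real.exp (Real.log ((Real.log v)^2)) := by
          rw [Real.exp_log (by positivity)]
      _ ≤ Real.exp (Real.log v) := Real.exp_le_exp.mpr h2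
      _ = v := Real.exp_log (by linarith)

/-- monotonicity of `(log log ·)^2` on `[e, ∞)`. -/
lemma lnln_sq_mono (u v : ℝ) (hu : Real.exp 1 ≤ u) (huv : u ≤ v) :
    (Real.log (Real.log u))^2 ≤ (Real.log (Real.log v))^2 := by
  have hu0 : (0:ℝ) < u := lt_of_lt_of_le (Real.exp_pos 1) hu
  have hlu : 1 ≤ Real.log u := by
    have := Real.log_le_log (Real.exp_pos 1) hu
    simpa [Real.log_exp] using this
  have hluv : Real.log u ≤ Real.log v := Real.log_le_log hu0 huv
  have h2 : Real.log (Real.log u) ≤ Real.log (Real.log v) :=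
    Real.log_le_log (by linarith) hluv
  have h3 : 0 ≤ Real.log (Real.log u) := Real.log_nonneg hlu
  exact pow_le_pow_left₀ h3 h2 2

/-- If `e ≤ u ≤ m²` and `2e ≤ m`, then `log log u ≤ log 2 + log log m`. -/
lemma lnln_chain (u m : ℝ) (hu : Real.exp 1 ≤ u) (hm : 2 * Real.exp 1 ≤ m)
    (h : u ≤ m^2) : Real.log (Real.log u) ≤ Real.log 2 + Real.log (Real.log m) := by
  have he : (2.7182818283 : ℝ) < Real.exp 1 := Real.exp_one_gt_d9
  have hm0 : (0:ℝ) < m := by linarith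
  have hu0 : (0:ℝ) < u := by linarith
  have hlu : 1 ≤ Real.log u := by
    have := Real.log_le_log (Real.exp_pos 1) hu
    simpa [Real.log_exp] using this
  have hlm : 1 < Real.log m := by
    have h2e : Real.log (2 * Real.exp 1) = Real.log 2 + 1 := by
      rw [Real.log_mul (by norm_num) (by positivity), Real.log_exp]
    have := Real.log_le_log (by positivity) hm
    rw [h2e] at this
    have l2 : (0:ℝ) < Real.log 2 := Real.log_pos (by norm_num)
    linarith
  have hlum : Real.log u ≤ 2 * Real.log m := by
    have := Real.log_le_log hu0 h
    rwa [Real.log_pow, Nat.cast_ofNat] at this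
  have step : Real.log (Real.log u) ≤ Real.log (2 * Real.log m) :=
    Real.log_le_log (by linarith) hlum
  have comb : Real.log (2 * Real.log m) = Real.log 2 + Real.log (Real.log m) :=
    Real.log_mul (by norm_num) (by linarith)
  linarith [step, comb.le, comb.ge]

/-- Key base bound: `(log log (4bE))² ≤ 2E`. -/
lemma step_main (b E K : ℝ) (hb : 0 < b) (hE : Real.exp 1 ≤ E) (hK : 0 ≤ K)
    (hbK : Real.exp 1 ≤ 2*b → (Real.log (Real.log (2*b)))^2 ≤ K)
    (he4 : Real.exp 1 ≤ 2*(2*b*E)) (hKE : K + Real.exp 1 ≤ E) :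
    (Real.log (Real.log (2*(2*b*E))))^2 ≤ 2*E := by
  have he : (2.7182818283 : ℝ) < Real.exp 1 := Real.exp_one_gt_d9
  have hE0 : (0:ℝ) < E := by linarith
  have he' : (2.7182818283 : ℝ) < Real.exp 1 := Real.exp_one_gt_d9
  have hll0 : 0 ≤ Real.log (Real.log (2*(2*b*E))) :=
    Real.log_nonneg ((Real.le_log_iff_exp_le (by linarith)).mpr he4)
  have l2p : (0:ℝ) < Real.log 2 := Real.log_pos (by norm_num)
  have l2u : Real.log 2 < 0.6931471808 := Real.log_two_lt_d9
  rcases le_total (2*b) (2*E) with hc | hc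
  · -- dominated by 2E
    have chain := lnln_chain (2*(2*b*E)) (2*E) he4 (by linarith) (by nlinarith)
    have h1 : (1:ℝ) ≤ Real.log (2*E) :=
      (Real.le_log_iff_exp_le (by linarith)).mpr (by linarith)
    have comb : Real.log (2 * Real.log (2*E)) = Real.log 2 + Real.log (Real.log (2*E)) :=
      Real.log_mul (by norm_num) (by linarith)
    have hsq : (Real.log (Real.log (2*(2*b*E))))^2 ≤ (Real.log (2 * Real.log (2*E)))^2 := by
      apply pow_le_pow_left₀ hll0 (by linarith [chain, comb.ge]) 2
    have s1 : (Real.log (2 * Real.log (2*E)))^2 ≤ 2 * Real.log (2*E) :=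
      sq_log_le _ (by linarith)
    have s2 : 2 * Real.log (2*E) ≤ 2*E := two_log_le (2*E) (by linarith)
    linarith
  · -- dominated by 2b
    have h2be : Real.exp 1 ≤ 2*b := by linarith
    have chain := lnln_chain (2*(2*b*E)) (2*b) he4 (by linarith) (by nlinarith)
    have hq0 : 0 ≤ Real.log (Real.log (2*b)) :=
      Real.log_nonneg ((Real.le_log_iff_exp_le (by linarith)).mpr h2be)
    have hqK : (Real.log (Real.log (2*b)))^2 ≤ K := hbK h2be
    have hsq : (Real.log (Real.log (2*(2*b*E))))^2
        ≤ (Real.log 2 + Real.log (Real.log (2*b)))^2 :=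
      pow_le_pow_left₀ hll0 chain 2
    nlinarith [sq_nonneg (Real.log (Real.log (2*b)) - Real.log 2)]

lemma increment (b y x : ℝ) (hb : 0 < b) (hy : Real.exp 1 ≤ y) (hby : b ≤ y)
    (hyx : y ≤ x) :
    (Real.log (Real.log x))^2 ≤ (Real.log (Real.log y))^2 + (x - y)/b := by
  have he : (2.7182818283 : ℝ) < Real.exp 1 := Real.exp_one_gt_d9
  have h1y : (1:ℝ) < y := by linarith
  set f : ℝ → ℝ := fun t => t/b - (Real.log (Real.log t))^2 with hf
  have hlog : ∀ t : ℝ, y ≤ t → 1 ≤ Real.log t := by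
    intro t ht
    have : Real.log (Real.exp 1) ≤ Real.log t :=
      Real.log_le_log (Real.exp_pos 1) (le_trans hy ht)
    simpa [Real.log_exp] using this
  have hd : ∀ t ∈ interior (Set.Ici y), HasDerivAt f
      (1/b - 2 * Real.log (Real.log t) * ((Real.log t)⁻¹ * t⁻¹)) t := by
    intro t ht
    rw [interior_Ici] at ht
    have hty : y < t := ht
    have ht0 : 0 < t := by linarith
    have hlt : 1 ≤ Real.log t := hlog t hty.le
    have d1 : HasDerivAt Real.log t⁻¹ t := Real.hasDerivAt_log (ne_of_gt ht0)
    have d2 : HasDerivAt Real.log (Real.log t)⁻¹ (Real.log t) :=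
      Real.hasDerivAt_log (by positivity)
    have d3 : HasDerivAt (fun s => Real.log (Real.log s))
        ((Real.log t)⁻¹ * t⁻¹) t := d2.comp t d1
    have d4 : HasDerivAt (fun s => (Real.log (Real.log s))^2)
        (2 * Real.log (Real.log t) * ((Real.log t)⁻¹ * t⁻¹)) t := by
      have := d3.fun_pow 2
      simpa [pow_one, mul_comm, mul_assoc] using this
    have d5 : HasDerivAt (fun s : ℝ => s / b) (1 / b) t :=
      (hasDerivAt_id t).div_const b
    simpa using d5.fun_sub d4
  have mono : MonotoneOn f (Set.Ici y) := by
    apply monotoneOn_of_deriv_nonneg (convex_Ici y)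
    · intro t ht
      have ht' : y ≤ t := ht
      have ht0 : 0 < t := by linarith
      have hlt : 1 ≤ Real.log t := hlog t ht'
      have c1 : ContinuousAt (fun s => Real.log (Real.log s)) t :=
        (Real.continuousAt_log (by positivity)).comp
          (Real.continuousAt_log (ne_of_gt ht0))
      exact ((continuousAt_id.div_const b).sub (c1.pow 2)).continuousWithinAt
    · intro t ht
      exact ((hd t ht).differentiableAt).differentiableWithinAt
    · intro t ht
      rw [(hd t ht).deriv]
      rw [interior_Ici] at ht
      have hty : y < t := ht
      have ht0 : 0 < t := by linarith
      have hlt : 1 ≤ Real.log t := hlog t hty.le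
      have hL0 : 0 ≤ Real.log (Real.log t) := Real.log_nonneg hlt
      have h2L : 2 * Real.log (Real.log t) ≤ Real.log t :=
        two_log_le _ (by linarith)
      have key : 2 * Real.log (Real.log t) * ((Real.log t)⁻¹ * t⁻¹)
          ≤ Real.log t * ((Real.log t)⁻¹ * t⁻¹) := by
        apply mul_le_mul_of_nonneg_right h2L
        positivity
      have heq : Real.log t * ((Real.log t)⁻¹ * t⁻¹) = t⁻¹ := by
        field_simp
      rw [heq] at key
      have htb : t⁻¹ ≤ b⁻¹ := inv_anti₀ hb (by linarith)
      have hob : (1:ℝ)/b = b⁻¹ := one_div b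
      linarith [key, htb]
  have hxy : f y ≤ f x := mono (Set.self_mem_Ici) (by exact hyx) hyx
  have hh : (x - y)/b = x/b - y/b := by ring
  simp only [hf] at hxy
  linarith [hxy, hh.symm.le]

/-- a deterministic iterated-logarithm inequality.
`l̄nln x = ln ln (max e x)`. If `x ≥ e`, `a, b > 0` and
`x ≥ a + 2b(e + l̄nln²(2a) + l̄nln²(2b))`, then `x ≥ a + b (ln ln x)²`. -/
theorem lnln_inequality (x a b : ℝ) (hx : Real.exp 1 ≤ x) (ha : 0 < a) (hb : 0 < b)
    (h : a + 2 * b * (Real.exp 1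
        + (Real.log (Real.log (max (Real.exp 1) (2 * a))))^2
        + (Real.log (Real.log (max (Real.exp 1) (2 * b))))^2) ≤ x) :
    a + b * (Real.log (Real.log x))^2 ≤ x := by
  have he : (2.7182818283 : ℝ) < Real.exp 1 := Real.exp_one_gt_d9
  obtain ⟨A, hAdef⟩ : ∃ A, (Real.log (Real.log (max (Real.exp 1) (2 * a))))^2 = A := ⟨_, rfl⟩
  obtain ⟨B, hBdef⟩ : ∃ B, (Real.log (Real.log (max (Real.exp 1) (2 * b))))^2 = B := ⟨_, rfl⟩
  rw [hAdef, hBdef] at h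
  have hA0 : 0 ≤ A := hAdef ▸ sq_nonneg _
  have hB0 : 0 ≤ B := hBdef ▸ sq_nonneg _
  obtain ⟨E, hEdef⟩ : ∃ E, Real.exp 1 + A + B = E := ⟨_, rfl⟩
  rw [hEdef] at h
  have hEe : Real.exp 1 ≤ E := by rw [← hEdef]; linarith
  have hEpos : 0 < E := by linarith
  -- base case: (lnln y)² ≤ (y − a)/b  for  y = max e (a+2bE)
  have key : (Real.log (Real.log (max (Real.exp 1) (a + 2*b*E))))^2
      ≤ (max (Real.exp 1) (a + 2*b*E) - a)/b := by
    rcases le_total (a + 2*b*E) (Real.exp 1) with h1 | h1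
    · rw [max_eq_left h1]
      have hz : Real.log (Real.log (Real.exp 1)) = 0 := by
        simp [Real.log_exp]
      rw [hz]
      have hae : a ≤ Real.exp 1 := by nlinarith
      have : (0:ℝ) ≤ (Real.exp 1 - a)/b := div_nonneg (by linarith) hb.le
      simpa using this
    · rw [max_eq_right h1]
      have hgoal : (Real.log (Real.log (a + 2*b*E)))^2 ≤ 2 * E := by
        rcases le_total a (2*b*E) with hm | hm
        · -- a ≤ 2bE : bound by lnln(4bE)
          have step1 : (Real.log (Real.log (a + 2*b*E)))^2
              ≤ (Real.log (Real.log (2*(2*b*E))))^2 :=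
            lnln_sq_mono _ _ h1 (by linarith)
          have step2 : (Real.log (Real.log (2*(2*b*E))))^2 ≤ 2*E := by
            apply step_main b E B hb hEe hB0 ?_ (by linarith) (by rw [← hEdef]; linarith)
            intro h2b
            rw [← hBdef, max_eq_right h2b]
          linarith
        · -- 2bE ≤ a : bound by lnln(2a)
          have step1 : (Real.log (Real.log (a + 2*b*E)))^2
              ≤ (Real.log (Real.log (2*a)))^2 :=
            lnln_sq_mono _ _ h1 (by linarith)
          have h2a : Real.exp 1 ≤ 2*a := by linarith
          have step2 : (Real.log (Real.log (2*a)))^2 = A := by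
            rw [← hAdef, max_eq_right h2a]
          rw [step2] at step1
          have : A ≤ 2*E := by rw [← hEdef]; linarith
          linarith
      have heq : (a + 2*b*E - a)/b = 2 * E := by
        field_simp
        ring
      rw [heq]
      exact hgoal
  -- monotone extension from y to x
  have hbley : b ≤ max (Real.exp 1) (a + 2*b*E) := by
    have : b ≤ a + 2*b*E := by nlinarith
    exact le_trans this (le_max_right _ _)
  have heley : Real.exp 1 ≤ max (Real.exp 1) (a + 2*b*E) := le_max_left _ _
  have hylex : max (Real.exp 1) (a + 2*b*E) ≤ x := max_le hx h
  have inc := increment b (max (Real.exp 1) (a + 2*b*E)) x hb heley hbley hylex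
  have hxa : (Real.log (Real.log x))^2 ≤ (x - a)/b := by
    have hsum : (max (Real.exp 1) (a + 2*b*E) - a)/b
        + (x - max (Real.exp 1) (a + 2*b*E))/b = (x - a)/b := by ring
    linarith
  have hfin : (Real.log (Real.log x))^2 * b ≤ x - a := by
    rw [← le_div_iff₀ hb]; exact hxa
  nlinarith [hfin]
end

section
/- (Regret equality for online ridge regression.) Let z_1, …, z_t ∈ ℝ^d and u_1, …, u_t ∈ ℝ be arbitrary, λ > 0, f_s(θ) = ½(⟨z_s,θ⟩ − u_s)², θ̂_s = argmin_θ Σ_{r=1}^s f_r(θ) + (λ/2)‖θ‖² (with θ̂_0 = 0), and Σ_s = λI + Σ_{r=1}^s z_r z_rᵀ. Then for every θ* ∈ ℝ^d: Σ_{s=1}^t (f_s(θ̂_{s−1}) − f_s(θ*)) = (λ/2)‖θ*‖² + Σ_{s=1}^t f_s(θ̂_{s−1}) ‖z_s‖²_{Σ_s⁻¹} − ½‖θ* − θ̂_t‖²_{Σ_t}. -/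
open Matrix Finset Real

lemma aux_vecMulVec_mulVec {d : ℕ} (x y w : Fin d → ℝ) :
    (vecMulVec x y) *ᵥ w = (y ⬝ᵥ w) • x := by
  ext i
  simp only [vecMulVec_apply, mulVec, dotProduct, Pi.smul_apply, smul_eq_mul, Finset.sum_mul]
  apply Finset.sum_congr rfl; intros; ring

lemma aux_sum_mulVec {d : ℕ} (S : Finset ℕ) (M : ℕ → Matrix (Fin d) (Fin d) ℝ) (v : Fin d → ℝ) :
    (∑ r ∈ S, M r) *ᵥ v = ∑ r ∈ S, (M r) *ᵥ v := by
  ext i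
  simp only [mulVec, dotProduct, Finset.sum_apply, Matrix.sum_apply, Finset.sum_mul]
  rw [Finset.sum_comm]

lemma aux_dotProduct_sum {d : ℕ} (S : Finset ℕ) (v : Fin d → ℝ) (w : ℕ → Fin d → ℝ) :
    v ⬝ᵥ (∑ r ∈ S, w r) = ∑ r ∈ S, v ⬝ᵥ w r := by
  simp only [dotProduct, Finset.sum_apply, Finset.mul_sum]
  rw [Finset.sum_comm]

/-- the FTRL regret equality for online ridge regression with
squared loss.  `θ̂_s` is the ridge-regression minimizer on the first `s`
samples (`θ̂_0 = 0`), `Σ_s = λI + Σ_{r=1}^s z_r z_rᵀ`, and for every comparator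
`θ*`:
`Σ_{s=1}^t (f_s(θ̂_{s−1}) − f_s(θ*)) = (λ/2)‖θ*‖² + Σ_{s=1}^t f_s(θ̂_{s−1})‖z_s‖²_{Σ_s⁻¹} − ½‖θ* − θ̂_t‖²_{Σ_t}`. -/
theorem regret_equality_online_ridge
    {d : ℕ} (t : ℕ) (z : ℕ → Fin d → ℝ) (u : ℕ → ℝ) (lam : ℝ) (hlam : 0 < lam)
    (f : ℕ → (Fin d → ℝ) → ℝ)
    (hf : ∀ s θ, f s θ = (1/2) * (z s ⬝ᵥ θ - u s)^2)
    (θhat : ℕ → Fin d → ℝ)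
    (hθ0 : θhat 0 = 0)
    (hθ : ∀ s, IsMinOn (fun θ : Fin d → ℝ =>
        (∑ r ∈ Finset.Icc 1 s, f r θ) + (lam/2) * (θ ⬝ᵥ θ)) Set.univ (θhat s))
    (Sig : ℕ → Matrix (Fin d) (Fin d) ℝ)
    (hSig : ∀ s, Sig s = lam • (1 : Matrix (Fin d) (Fin d) ℝ)
        + ∑ r ∈ Finset.Icc 1 s, vecMulVec (z r) (z r))
    (θstar : Fin d → ℝ) :
    ∑ s ∈ Finset.Icc 1 t, (f s (θhat (s-1)) - f s θstar)
      = (lam/2) * (θstar ⬝ᵥ θstar)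
        + (∑ s ∈ Finset.Icc 1 t, f s (θhat (s-1)) * (z s ⬝ᵥ (Sig s)⁻¹.mulVec (z s)))
        - (1/2) * ((θstar - θhat t) ⬝ᵥ (Sig t).mulVec (θstar - θhat t)) := by
  set b : ℕ → Fin d → ℝ := fun s => ∑ r ∈ Finset.Icc 1 s, u r • z r with hb
  set F : ℕ → (Fin d → ℝ) → ℝ :=
    fun s θ => (∑ r ∈ Finset.Icc 1 s, f r θ) + (lam/2) * (θ ⬝ᵥ θ) with hF
  -- quadratic form
  have quad : ∀ s (x y : Fin d → ℝ), x ⬝ᵥ Sig s *ᵥ y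
      = lam * (x ⬝ᵥ y) + ∑ r ∈ Finset.Icc 1 s, (z r ⬝ᵥ x) * (z r ⬝ᵥ y) := by
    intro s x y
    rw [hSig, Matrix.add_mulVec, dotProduct_add, smul_mulVec, one_mulVec,
      dotProduct_smul, aux_sum_mulVec, aux_dotProduct_sum]
    simp only [aux_vecMulVec_mulVec, dotProduct_smul, smul_eq_mul]
    congr 1
    apply Finset.sum_congr rfl; intro r _
    rw [dotProduct_comm x]; ring
  have qcomm : ∀ s (x y : Fin d → ℝ), x ⬝ᵥ Sig s *ᵥ y = y ⬝ᵥ Sig s *ᵥ x := by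
    intro s x y
    rw [quad, quad, dotProduct_comm x]
    congr 1
    apply Finset.sum_congr rfl; intros; ring
  have hpos : ∀ s (v : Fin d → ℝ), v ≠ 0 → 0 < v ⬝ᵥ Sig s *ᵥ v := by
    intro s v hv
    rw [quad]
    have h0 : 0 ≤ v ⬝ᵥ v := Finset.sum_nonneg fun i _ => mul_self_nonneg _
    have hne : v ⬝ᵥ v ≠ 0 := fun h => hv (dotProduct_self_eq_zero.mp h)
    have h2 : 0 ≤ ∑ r ∈ Finset.Icc 1 s, (z r ⬝ᵥ v) * (z r ⬝ᵥ v) :=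
      Finset.sum_nonneg fun r _ => mul_self_nonneg _
    have : 0 < v ⬝ᵥ v := lt_of_le_of_ne h0 (Ne.symm hne)
    nlinarith
  have hherm : ∀ s, (Sig s).IsHermitian := by
    intro s
    ext i j
    simp only [conjTranspose_apply, star_trivial, hSig, Matrix.add_apply, Matrix.sum_apply,
      Matrix.smul_apply, Matrix.one_apply, vecMulVec_apply, smul_eq_mul]
    congr 1
    · congr 1
      simp [eq_comm]
    · apply Finset.sum_congr rfl; intros; ring
  have hposdef : ∀ s, (Sig s).PosDef := fun s =>
    Matrix.PosDef.of_dotProduct_mulVec_pos (hherm s) fun x hx => by simpa using hpos s x hx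
  have hinv : ∀ s, (Sig s)⁻¹ * (Sig s) = 1 := fun s =>
    Matrix.nonsing_inv_mul _ (hposdef s).det_pos.ne'.isUnit
  -- b dot product
  have bdot : ∀ s (x : Fin d → ℝ), b s ⬝ᵥ x = ∑ r ∈ Finset.Icc 1 s, u r * (z r ⬝ᵥ x) := by
    intro s x
    rw [hb]
    simp only
    rw [dotProduct_comm, aux_dotProduct_sum]
    apply Finset.sum_congr rfl; intro r _
    rw [dotProduct_smul, smul_eq_mul, dotProduct_comm]
  -- F in quadratic form
  have Fexpand : ∀ s (θ : Fin d → ℝ), F s θ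
      = (1/2) * (θ ⬝ᵥ Sig s *ᵥ θ) - (b s ⬝ᵥ θ)
        + (1/2) * ∑ r ∈ Finset.Icc 1 s, (u r)^2 := by
    intro s θ
    rw [hF]
    simp only
    rw [quad, bdot]
    have : ∑ r ∈ Finset.Icc 1 s, f r θ
        = ∑ r ∈ Finset.Icc 1 s,
            ((1/2) * (z r ⬝ᵥ θ)^2 - u r * (z r ⬝ᵥ θ) + (1/2) * (u r)^2) := by
      apply Finset.sum_congr rfl; intro r _
      rw [hf]; ring
    rw [this]
    simp only [Finset.sum_add_distrib, Finset.sum_sub_distrib, ← Finset.mul_sum]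
    have hsq : ∀ r, (z r ⬝ᵥ θ) * (z r ⬝ᵥ θ) = (z r ⬝ᵥ θ)^2 := fun r => (sq _).symm
    simp only [hsq]
    ring
  -- quadratic expansion around any point
  have expand : ∀ s (θ θ' : Fin d → ℝ), F s θ
      = F s θ' + ((θ - θ') ⬝ᵥ (Sig s *ᵥ θ' - b s))
        + (1/2) * ((θ - θ') ⬝ᵥ Sig s *ᵥ (θ - θ')) := by
    intro s θ θ'
    rw [Fexpand, Fexpand]
    simp only [sub_dotProduct, dotProduct_sub, Matrix.mulVec_sub]
    have h1 : θ' ⬝ᵥ Sig s *ᵥ θ = θ ⬝ᵥ Sig s *ᵥ θ' := qcomm s θ' θ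
    have h2 : θ ⬝ᵥ b s = b s ⬝ᵥ θ := dotProduct_comm _ _
    have h3 : θ' ⬝ᵥ b s = b s ⬝ᵥ θ' := dotProduct_comm _ _
    linear_combination h2 - h3 + (1/2) * h1
  -- first-order condition
  have foc : ∀ s, Sig s *ᵥ θhat s = b s := by
    intro s
    set w : Fin d → ℝ := Sig s *ᵥ θhat s - b s with hw
    suffices hws : w = 0 by
      have := sub_eq_zero.mp hws
      exact this
    by_contra hne
    have hq : 0 < w ⬝ᵥ Sig s *ᵥ w := hpos s w hne
    have hc : 0 < w ⬝ᵥ w := by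
      have h0 : 0 ≤ w ⬝ᵥ w := Finset.sum_nonneg fun i _ => mul_self_nonneg _
      exact lt_of_le_of_ne h0 (Ne.symm fun h => hne (dotProduct_self_eq_zero.mp h))
    set c := w ⬝ᵥ w with hcdef
    set a := w ⬝ᵥ Sig s *ᵥ w with hadef
    set θ₁ : Fin d → ℝ := θhat s - (c / a) • w with hθ₁
    have hmin := (hθ s) (Set.mem_univ θ₁)
    have hFmin : F s (θhat s) ≤ F s θ₁ := hmin
    have hdiff : θ₁ - θhat s = -((c/a) • w) := by
      rw [hθ₁]; abel
    have hexp := expand s θ₁ (θhat s)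
    rw [hdiff] at hexp
    have e1 : (-((c/a) • w)) ⬝ᵥ (Sig s *ᵥ θhat s - b s) = -((c/a) * c) := by
      rw [← hw, neg_dotProduct, smul_dotProduct, smul_eq_mul, ← hcdef]
    have e2 : (-((c/a) • w)) ⬝ᵥ Sig s *ᵥ (-((c/a) • w)) = (c/a)^2 * a := by
      rw [Matrix.mulVec_neg, Matrix.mulVec_smul, neg_dotProduct, dotProduct_neg,
        neg_neg, smul_dotProduct, dotProduct_smul, smul_eq_mul, smul_eq_mul, ← hadef]
      ring
    rw [e1, e2] at hexp
    have : F s θ₁ = F s (θhat s) - (1/2) * (c^2 / a) := by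
      rw [hexp]; field_simp; ring
    rw [this] at hFmin
    have hcc : 0 < c^2 / a := div_pos (by positivity) hq
    linarith
  -- expansion around the minimizer
  have expand' : ∀ s (θ : Fin d → ℝ), F s θ
      = F s (θhat s) + (1/2) * ((θ - θhat s) ⬝ᵥ Sig s *ᵥ (θ - θhat s)) := by
    intro s θ
    have h := expand s θ (θhat s)
    rw [foc s, sub_self, dotProduct_zero] at h
    linarith
  have hb_succ : ∀ k, b (k+1) = b k + u (k+1) • z (k+1) := by
    intro k; rw [hb]; simp only
    rw [Finset.sum_Icc_succ_top (by omega)]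
  have hSig_succ : ∀ k, Sig (k+1) = Sig k + vecMulVec (z (k+1)) (z (k+1)) := by
    intro k; rw [hSig, hSig, Finset.sum_Icc_succ_top (by omega)]
    abel
  have hFs_succ : ∀ k (θ : Fin d → ℝ), F (k+1) θ = F k θ + f (k+1) θ := by
    intro k θ; rw [hF]; simp only
    rw [Finset.sum_Icc_succ_top (by omega)]; ring
  have step : ∀ k, Sig (k+1) *ᵥ (θhat k - θhat (k+1))
      = (z (k+1) ⬝ᵥ θhat k - u (k+1)) • z (k+1) := by
    intro k
    have h1 : Sig (k+1) *ᵥ θhat k = b k + (z (k+1) ⬝ᵥ θhat k) • z (k+1) := by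
      rw [hSig_succ, Matrix.add_mulVec, foc k, aux_vecMulVec_mulVec]
    rw [Matrix.mulVec_sub, h1, foc (k+1), hb_succ]
    module
  have hdelta : ∀ k, θhat k - θhat (k+1)
      = (Sig (k+1))⁻¹ *ᵥ ((z (k+1) ⬝ᵥ θhat k - u (k+1)) • z (k+1)) := by
    intro k
    rw [← step k, Matrix.mulVec_mulVec, hinv (k+1), Matrix.one_mulVec]
  have hquadstep : ∀ k, (1/2) * ((θhat k - θhat (k+1)) ⬝ᵥ Sig (k+1) *ᵥ (θhat k - θhat (k+1)))
      = f (k+1) (θhat k) * (z (k+1) ⬝ᵥ (Sig (k+1))⁻¹ *ᵥ z (k+1)) := by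
    intro k
    rw [step k, hdelta k, Matrix.mulVec_smul, smul_dotProduct, dotProduct_smul,
      smul_eq_mul, smul_eq_mul, hf, dotProduct_comm (z (k+1)) ((Sig (k+1))⁻¹ *ᵥ z (k+1))]
    ring
  have mrec : ∀ k, F (k+1) (θhat (k+1))
      = F k (θhat k) + f (k+1) (θhat k) * (1 - z (k+1) ⬝ᵥ (Sig (k+1))⁻¹ *ᵥ z (k+1)) := by
    intro k
    have h2 := expand' (k+1) (θhat k)
    rw [hFs_succ k (θhat k)] at h2
    have h3 := hquadstep k
    linear_combination -h2 - h3
  have m0 : F 0 (θhat 0) = 0 := by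
    rw [hF]; simp [hθ0, Finset.Icc_eq_empty_of_lt (by norm_num : (0:ℕ) < 1)]
  have mform : ∀ n, F n (θhat n)
      = ∑ s ∈ Finset.Icc 1 n, f s (θhat (s-1)) * (1 - z s ⬝ᵥ (Sig s)⁻¹ *ᵥ z s) := by
    intro n
    induction n with
    | zero => simpa using m0
    | succ k ih =>
      rw [Finset.sum_Icc_succ_top (by omega), ← ih, mrec k]
      norm_num
  have hFt : ∑ s ∈ Finset.Icc 1 t, f s θstar
      = F t θstar - (lam/2)*(θstar ⬝ᵥ θstar) := by
    rw [hF]; ring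
  have hsplit : ∑ s ∈ Finset.Icc 1 t, f s (θhat (s-1)) * (1 - z s ⬝ᵥ (Sig s)⁻¹ *ᵥ z s)
      = (∑ s ∈ Finset.Icc 1 t, f s (θhat (s-1)))
        - ∑ s ∈ Finset.Icc 1 t, f s (θhat (s-1)) * (z s ⬝ᵥ (Sig s)⁻¹ *ᵥ z s) := by
    rw [← Finset.sum_sub_distrib]
    apply Finset.sum_congr rfl; intros; ring
  have hstar := expand' t θstar
  rw [Finset.sum_sub_distrib, hFt, hstar, mform t, hsplit]
  ring
end
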